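/- (Quantile bound via the f₁-divergence, first form.) Let 0 < ε ≤ 2. If η ≥ log(2/ε) + 1 + log(1 + D), then P({ω : r(ω) > η}) ≤ ε/2. -/
import Mathlib


open MeasureTheory

/-- Quantile bound via the `f₁`-divergence, first form: for `0 < ε ≤ 2`, if
`η ≥ log(2/ε) + 1 + log(1 + D)` where `D = ∫ f₁(r) dQ` with `f₁(x) = x·exp(x−1) − 1`,
then `P({ω : r ω > η}) ≤ ε/2`. -/
theorem stmt4 {Ω : Type*} [MeasurableSpace Ω]
    (P Q : Measure Ω) [IsProbabilityMeasure P] [IsProbabilityMeasure Q]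
    (r : Ω → ℝ) (hr_meas : Measurable r) (hr_nonneg : ∀ ω, 0 ≤ r ω)
    (hPQ : ∀ A : Set Ω, MeasurableSet A → (P A).toReal = ∫ ω in A, r ω ∂Q)
    (hint : Integrable (fun ω => r ω * Real.exp (r ω)) Q)
    (D : ℝ) (hD : D = ∫ ω, (r ω * Real.exp (r ω - 1) - 1) ∂Q)
    (ε η : ℝ) (hε0 : 0 < ε) (hε2 : ε ≤ 2)
    (hη : Real.log (2 / ε) + 1 + Real.log (1 + D) ≤ η) :
    (P {ω | η < r ω}).toReal ≤ ε / 2 := by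
  have hr_int : Integrable r Q := by
    refine hint.mono hr_meas.aestronglyMeasurable (Filter.Eventually.of_forall fun ω => ?_)
    have h0 := hr_nonneg ω
    have h1 : (1:ℝ) ≤ Real.exp (r ω) := Real.one_le_exp h0
    simp only [Real.norm_eq_abs, abs_of_nonneg h0,
      abs_of_nonneg (mul_nonneg h0 (Real.exp_pos _).le)]
    nlinarith
  have hre_int : Integrable (fun ω => r ω * Real.exp (r ω - 1)) Q := by
    have : (fun ω => r ω * Real.exp (r ω - 1))
        = (fun ω => (r ω * Real.exp (r ω)) * Real.exp (-1)) := by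
      funext ω
      rw [Real.exp_sub]
      rw [Real.exp_neg]
      field_simp
    rw [this]
    exact hint.mul_const _
  have h_int_r : ∫ ω, r ω ∂Q = 1 := by
    have := hPQ Set.univ MeasurableSet.univ
    simp at this
    rw [← this]
  have hD1 : ∫ ω, r ω * Real.exp (r ω - 1) ∂Q = D + 1 := by
    rw [hD, integral_sub hre_int (integrable_const 1)]
    simp
  have hD0 : 0 ≤ D := by
    have hmono : ∫ ω, (2 * r ω - 1) ∂Q ≤ ∫ ω, r ω * Real.exp (r ω - 1) ∂Q := by
      refine integral_mono ((hr_int.const_mul 2).sub (integrable_const 1)) hre_int fun ω => ?_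
      have h0 := hr_nonneg ω
      have h1 := Real.add_one_le_exp (r ω - 1)
      nlinarith [sq_nonneg (r ω - 1), mul_le_mul_of_nonneg_left h1 h0]
    rw [integral_sub (hr_int.const_mul 2) (integrable_const 1)] at hmono
    simp [integral_const_mul, h_int_r] at hmono
    linarith [hD1 ▸ hmono]
  set S : Set Ω := {ω | η < r ω} with hS_def
  have hS : MeasurableSet S := measurableSet_lt measurable_const hr_meas
  have key : (P S).toReal ≤ (D + 1) * Real.exp (1 - η) := by
    rw [hPQ S hS]
    have step1 : ∫ ω in S, r ω ∂Q
        ≤ ∫ ω in S, r ω * Real.exp (r ω - 1) * Real.exp (1 - η) ∂Q := by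
      refine setIntegral_mono_on hr_int.integrableOn
        ((hre_int.mul_const _).integrableOn) hS fun ω hω => ?_
      have hrω : η < r ω := hω
      have h0 := hr_nonneg ω
      have : Real.exp (r ω - 1) * Real.exp (1 - η) = Real.exp (r ω - η) := by
        rw [← Real.exp_add]; ring_nf
      rw [mul_assoc, this]
      have h1 : (1:ℝ) ≤ Real.exp (r ω - η) := Real.one_le_exp (by linarith)
      nlinarith
    have step2 : ∫ ω in S, r ω * Real.exp (r ω - 1) * Real.exp (1 - η) ∂Q
        ≤ ∫ ω, r ω * Real.exp (r ω - 1) * Real.exp (1 - η) ∂Q := by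
      refine setIntegral_le_integral (hre_int.mul_const _)
        (Filter.Eventually.of_forall fun ω => ?_)
      have h0 := hr_nonneg ω
      positivity
    have step3 : ∫ ω, r ω * Real.exp (r ω - 1) * Real.exp (1 - η) ∂Q
        = (D + 1) * Real.exp (1 - η) := by
      rw [integral_mul_const, hD1]
    linarith
  refine key.trans ?_
  have hD1pos : (0:ℝ) < 1 + D := by linarith
  have hε2' : (0:ℝ) < ε / 2 := by linarith
  have hexp : Real.exp (1 - η) ≤ ε / 2 / (1 + D) := by
    rw [← Real.exp_log (div_pos hε2' hD1pos)]
    apply Real.exp_le_exp.2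
    rw [Real.log_div (ne_of_gt hε2') (ne_of_gt hD1pos)]
    have h2ε : Real.log (2 / ε) = -Real.log (ε / 2) := by
      rw [← Real.log_inv]
      congr 1
      field_simp
    linarith [h2ε ▸ hη]
  calc (D + 1) * Real.exp (1 - η) ≤ (D + 1) * (ε / 2 / (1 + D)) :=
        mul_le_mul_of_nonneg_left hexp (by linarith)
    _ = ε / 2 := by field_simp; ring
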